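/- The elements of S_1 are pairwise distinct modulo the ideal ⟨Q̄⟩; equivalently, S_1 ∩ ⟨Q̄⟩ = {0}, i.e., no nonzero k-linear form in the variables x_{ij} lies in the ideal generated by Q̄. -/

import Mathlib

open MvPolynomial

noncomputable section

def Vspace {σ K : Type*} [Field K] (G : Set (MvPolynomial σ K)) (i : ℕ) :
    Submodule K (MvPolynomial σ K) :=
  sInf {W : Submodule K (MvPolynomial σ K) |
    (∀ f ∈ W, MvPolynomial.totalDegree f ≤ i) ∧
    (∀ g ∈ G, MvPolynomial.totalDegree g ≤ i → g ∈ W) ∧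
    ∀ g ∈ W, ∀ h : MvPolynomial σ K,
      MvPolynomial.totalDegree (h * g) ≤ i → h * g ∈ W}

def lastFallDegree {σ K : Type*} [Field K] (G : Set (MvPolynomial σ K)) : ℕ :=
  sSup {d : ℕ | 0 < d ∧
    Vspace G d ⊓ MvPolynomial.restrictTotalDegree σ K (d - 1) ≠ Vspace G (d - 1)}

/-- `ℓ(h(x_i))` : the linear form `∑_j h_j x_{ij}` in `S = k[x_{ij}]`,
for a univariate polynomial `h` of degree `< n'`. -/
def ellAt {k : Type*} [Field k] (m n' : ℕ) (i : Fin m) (h : Polynomial k) :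
    MvPolynomial (Fin m × Fin n') k :=
  ∑ j : Fin n', C (h.coeff (j : ℕ)) * X (i, j)

/-- `ℓ(f)` for `f = ∑_i f_i(x_i)` with `deg f_i < n'`. -/
def ellSum {k : Type*} [Field k] (m n' : ℕ) (φ : Fin m → Polynomial k) :
    MvPolynomial (Fin m × Fin n') k :=
  ∑ i : Fin m, ellAt m n' i (φ i)

/-- `Q̄_r` : the set of relations `x_{ij}^q - x_{i,j+1}` (for `j < n'-1`) and
`x_{i,n'-1}^q - ℓ(g_W(x_i))`, restricted to indices `i ≥ r`. -/
def QbarFrom {k : Type*} [Field k] (m n' q r : ℕ) (gW : Polynomial k) :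
    Set (MvPolynomial (Fin m × Fin n') k) :=
  {P | ∃ (i : Fin m) (j : Fin n') (hj : (j : ℕ) + 1 < n'), r ≤ (i : ℕ) ∧
        P = X (i, j) ^ q - X (i, ⟨(j : ℕ) + 1, hj⟩)} ∪
  {P | ∃ (i : Fin m) (j : Fin n'), r ≤ (i : ℕ) ∧ (j : ℕ) + 1 = n' ∧
        P = X (i, j) ^ q - ellAt m n' i gW}

/-- `S_{1r}` : the space of `k`-linear forms in the variables `x_{ij}` with `i ≥ r`. -/
def S1r {k : Type*} [Field k] (m n' : ℕ) (r : ℕ) :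
    Submodule k (MvPolynomial (Fin m × Fin n') k) :=
  Submodule.span k {P | ∃ p : Fin m × Fin n', r ≤ (p.1 : ℕ) ∧ P = X p}

/-- `L(h)` for `h = ∑_i h_i(x_i)` with `deg h_i < n` : the `k'`-linearized polynomial
`∑_i ∑_j h_{ij} x_i^{q^j}`. -/
def Lmap {k : Type*} [Field k] (m n q : ℕ) (h : Fin m → Polynomial k) :
    MvPolynomial (Fin m) k :=
  ∑ i : Fin m, ∑ j : Fin n, C ((h i).coeff (j : ℕ)) * X i ^ q ^ (j : ℕ)

/-- `F` is reducible for `W` (where `W` corresponds to `f_W`): for each `i < m-1`,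
either `V_{Ḡ,q} ∩ S_{1i} = V_{Ḡ,q} ∩ S_{1,i+1}`, or some `k'`-linearized `L(f_i)`,
`f_i = ∑_{j≥i} g_{ij}` with `deg g_{ij} < n'`, has `ℓ(f_i) ∈ V_{Ḡ,q} ∩ S_{1i}` and
`gcd(g_{ii}, f_W) = 1`. -/
def ReducibleFor {k' k : Type*} [Field k'] [Field k] [Algebra k' k]
    (q m n' : ℕ) (fW : Polynomial k')
    (Gbar : Set (MvPolynomial (Fin m × Fin n') k)) : Prop :=
  ∀ i : Fin m, (i : ℕ) + 1 < m →
    (Vspace Gbar q ⊓ S1r m n' (i : ℕ) = Vspace Gbar q ⊓ S1r m n' ((i : ℕ) + 1)) ∨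
    ∃ φ : Fin m → Polynomial k,
      (∀ j, (φ j).natDegree < n') ∧
      (∀ j : Fin m, (j : ℕ) < (i : ℕ) → φ j = 0) ∧
      ellSum m n' φ ∈ Vspace Gbar q ⊓ S1r m n' (i : ℕ) ∧
      IsCoprime (φ i) (fW.map (algebraMap k' k))


namespace QbarAux
open Polynomial
set_option linter.unusedSectionVars false

variable {k' k : Type} [Field k'] [Fintype k'] [Field k] [Algebra k' k]

def linEval (q : ℕ) (u : Polynomial k') (a : k) : k :=
  u.sum fun j c => algebraMap k' k c * a ^ q ^ j

theorem linEval_eq_sum_range (q : ℕ) (u : Polynomial k') (a : k) {N : ℕ} (h : u.natDegree < N) :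
    linEval q u a = ∑ j ∈ Finset.range N, algebraMap k' k (u.coeff j) * a ^ q ^ j :=
  Polynomial.sum_over_range' u (fun n => by simp) N h

theorem linEval_add (q : ℕ) (u v : Polynomial k') (a : k) :
    linEval q (u + v) a = linEval q u a + linEval q v a :=
  Polynomial.sum_add_index u v _ (fun i => by simp) (fun i b c => by simp [add_mul])

theorem linEval_neg (q : ℕ) (u : Polynomial k') (a : k) :
    linEval q (-u) a = - linEval q u a := by
  have h := linEval_add q u (-u) a
  simp only [add_neg_cancel] at h
  have h0 : linEval q (0 : Polynomial k') a = 0 := by simp [linEval]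
  rw [h0] at h
  exact (neg_eq_of_add_eq_zero_right h.symm).symm

theorem linEval_sub (q : ℕ) (u v : Polynomial k') (a : k) :
    linEval q (u - v) a = linEval q u a - linEval q v a := by
  rw [sub_eq_add_neg, linEval_add, linEval_neg, sub_eq_add_neg]

theorem linEval_monomial (q : ℕ) (e : ℕ) (c : k') (a : k) :
    linEval q (Polynomial.monomial e c) a = algebraMap k' k c * a ^ q ^ e :=
  Polynomial.sum_monomial_index c _ (by simp)

theorem linEval_X_pow (q : ℕ) (e : ℕ) (a : k) :
    linEval q ((Polynomial.X : Polynomial k') ^ e) a = a ^ q ^ e := by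
  rw [Polynomial.X_pow_eq_monomial, linEval_monomial]; simp

theorem linEval_one (q : ℕ) (a : k) : linEval q (1 : Polynomial k') a = a := by
  have := linEval_X_pow (k := k) (k' := k') q 0 a
  simpa using this

theorem linEval_zero_left (q : ℕ) (a : k) : linEval q (0 : Polynomial k') a = 0 := by
  simp [linEval]

theorem linEval_zero_right (q : ℕ) (hq : q = Fintype.card k') (u : Polynomial k') :
    linEval q u (0 : k) = 0 := by
  have hq2 : 2 ≤ q := by rw [hq]; exact Fintype.one_lt_card
  unfold linEval Polynomial.sum
  apply Finset.sum_eq_zero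
  intro j hj
  simp only []
  rw [zero_pow (by positivity), mul_zero]


theorem pow_q_pow_add (q : ℕ) (hq : q = Fintype.card k') (x y : k) (e : ℕ) :
    (x + y) ^ q ^ e = x ^ q ^ e + y ^ q ^ e := by
  set p := ringChar k' with hp
  obtain ⟨s, hprime, hcard⟩ := FiniteField.card k' p
  haveI : Fact p.Prime := ⟨hprime⟩
  haveI : CharP k p := charP_of_injective_algebraMap (algebraMap k' k).injective p
  have hqe : q ^ e = p ^ (s * e) := by rw [hq, hcard, pow_mul]
  rw [hqe]
  exact add_pow_char_pow x y p (s * e)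

theorem algebraMap_pow_q_pow (q : ℕ) (hq : q = Fintype.card k') (c : k') (e : ℕ) :
    (algebraMap k' k c) ^ q ^ e = algebraMap k' k c := by
  rw [← map_pow, hq, FiniteField.pow_card_pow]

theorem linEval_pow_q_pow (q : ℕ) (hq : q = Fintype.card k') (u : Polynomial k') (a : k) (e : ℕ) :
    (linEval q u a) ^ q ^ e = linEval q u (a ^ q ^ e) := by
  set p := ringChar k' with hp
  obtain ⟨s, hprime, hcard⟩ := FiniteField.card k' p
  haveI : Fact p.Prime := ⟨hprime⟩
  haveI : CharP k p := charP_of_injective_algebraMap (algebraMap k' k).injective p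
  have hqe : q ^ e = p ^ (s * e) := by rw [hq, hcard, pow_mul]
  unfold linEval Polynomial.sum
  rw [hqe, ← iterateFrobenius_def (R := k) p (s * e), map_sum]
  apply Finset.sum_congr rfl
  intro j hj
  rw [iterateFrobenius_def, ← hqe, mul_pow, algebraMap_pow_q_pow q hq]
  simp only []
  rw [← pow_mul, ← pow_mul, mul_comm (q ^ j)]

theorem linEval_add_right (q : ℕ) (hq : q = Fintype.card k') (u : Polynomial k') (x y : k) :
    linEval q u (x + y) = linEval q u x + linEval q u y := by
  unfold linEval Polynomial.sum
  rw [← Finset.sum_add_distrib]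
  apply Finset.sum_congr rfl
  intro j hj
  simp only []
  rw [pow_q_pow_add q hq, mul_add]

theorem linEval_monomial_mul (q : ℕ) (hq : q = Fintype.card k') (e : ℕ) (c : k')
    (v : Polynomial k') (a : k) :
    linEval q (Polynomial.monomial e c * v) a = algebraMap k' k c * (linEval q v a) ^ q ^ e := by
  induction v using Polynomial.induction_on' with
  | add p r hp hr =>
      rw [mul_add, linEval_add, hp, hr, linEval_add, pow_q_pow_add q hq, mul_add]
  | monomial j d =>
      rw [Polynomial.monomial_mul_monomial, linEval_monomial, linEval_monomial, mul_pow,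
        algebraMap_pow_q_pow q hq, ← pow_mul, map_mul, mul_assoc, ← pow_add, add_comm e j]

theorem linEval_mul (q : ℕ) (hq : q = Fintype.card k') (u v : Polynomial k') (a : k) :
    linEval q (u * v) a = linEval q u (linEval q v a) := by
  induction u using Polynomial.induction_on' with
  | add p r hp hr => rw [add_mul, linEval_add, hp, hr, linEval_add]
  | monomial e c => rw [linEval_monomial_mul q hq, linEval_monomial]

/-- The honest univariate polynomial `∑_{j<N} c_j X^{q^j}` over `k`. -/
def linPoly (q N : ℕ) (c : ℕ → k) : Polynomial k :=
  ∑ j ∈ Finset.range N, Polynomial.C (c j) * Polynomial.X ^ q ^ j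

theorem linPoly_natDegree_le {q : ℕ} (hq1 : 1 ≤ q) (N : ℕ) (c : ℕ → k) :
    (linPoly q N c).natDegree ≤ q ^ (N - 1) := by
  refine le_trans (Polynomial.natDegree_sum_le _ _) ?_
  simp only [Finset.fold_max_le]
  constructor
  · positivity
  · intro j hj
    rw [Finset.mem_range] at hj
    refine le_trans (Polynomial.natDegree_C_mul_le _ _) ?_
    rw [Polynomial.natDegree_X_pow]
    exact Nat.pow_le_pow_right hq1 (by omega : j ≤ N - 1)

theorem linPoly_coeff {q : ℕ} (hq2 : 2 ≤ q) (N : ℕ) (c : ℕ → k) {j0 : ℕ} (hj0 : j0 < N) :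
    (linPoly q N c).coeff (q ^ j0) = c j0 := by
  unfold linPoly
  rw [Polynomial.finset_sum_coeff]
  rw [Finset.sum_eq_single j0]
  · simp
  · intro j hj hne
    rw [Polynomial.coeff_C_mul, Polynomial.coeff_X_pow, if_neg, mul_zero]
    exact fun h => hne (Nat.pow_right_injective hq2 h.symm)
  · intro h; exact absurd (Finset.mem_range.mpr hj0) h

theorem linPoly_eval (q N : ℕ) (c : ℕ → k) (a : k) :
    Polynomial.eval a (linPoly q N c) = ∑ j ∈ Finset.range N, c j * a ^ q ^ j := by
  unfold linPoly
  rw [Polynomial.eval_finset_sum]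
  simp

theorem linPoly_coeff_eq_zero_of_roots [Fintype k] {q : ℕ} (hq2 : 2 ≤ q) (N : ℕ) (c : ℕ → k)
    (V : Set k) (hV : ∀ v ∈ V, Polynomial.eval v (linPoly q N c) = 0)
    (hcard : q ^ (N - 1) < Nat.card V) : ∀ j0 < N, c j0 = 0 := by
  classical
  have hP : linPoly q N c = 0 := by
    by_contra hP
    have hVfin : V.Finite := Set.toFinite V
    have hsub : hVfin.toFinset ⊆ (linPoly q N c).roots.toFinset := by
      intro v hv
      rw [Set.Finite.mem_toFinset] at hv
      rw [Multiset.mem_toFinset, Polynomial.mem_roots hP]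
      exact hV v hv
    have h1 : Nat.card V = hVfin.toFinset.card := by
      rw [Nat.card_eq_card_finite_toFinset hVfin]
    have h2 : hVfin.toFinset.card ≤ (linPoly q N c).roots.toFinset.card :=
      Finset.card_le_card hsub
    have h3 : (linPoly q N c).roots.toFinset.card ≤ Multiset.card (linPoly q N c).roots :=
      Multiset.toFinset_card_le _
    have h4 := Polynomial.card_roots' (linPoly q N c)
    have h5 := linPoly_natDegree_le (k := k) (by omega : 1 ≤ q) N c
    omega
  intro j0 hj0
  rw [← linPoly_coeff hq2 N c hj0, hP, Polynomial.coeff_zero]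

theorem card_range_linEval (q : ℕ) (hq : q = Fintype.card k') [Fintype k]
    (g : Polynomial k') (hg : g.Monic) :
    Fintype.card k ≤ Nat.card (Set.range (linEval (k := k) q g)) * q ^ g.natDegree := by
  classical
  have hq2 : 2 ≤ q := by rw [hq]; exact Fintype.one_lt_card
  set L : k →+ k := AddMonoidHom.mk' (linEval q g) (linEval_add_right q hq g) with hL
  have hcard : Nat.card k = Nat.card (k ⧸ L.ker) * Nat.card L.ker :=
    AddSubgroup.card_eq_card_quotient_mul_card_addSubgroup L.ker
  have hquot : Nat.card (k ⧸ L.ker) = Nat.card L.range :=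
    Nat.card_congr (QuotientAddGroup.quotientKerEquivRange L).toEquiv
  have hrange : Nat.card L.range = Nat.card (Set.range (linEval (k := k) q g)) := rfl
  -- bound on kernel
  have hker : Nat.card L.ker ≤ q ^ g.natDegree := by
    set c : ℕ → k := fun j => algebraMap k' k (g.coeff j) with hc
    set P := linPoly q (g.natDegree + 1) c with hPdef
    have hPne : P ≠ 0 := by
      intro h
      have := linPoly_coeff (k := k) hq2 (g.natDegree + 1) c (Nat.lt_succ_self _)
      rw [← hPdef, h, Polynomial.coeff_zero] at this
      rw [hc] at this
      simp only [Polynomial.Monic.coeff_natDegree hg, map_one] at this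
      exact one_ne_zero this.symm
    have hroots : ∀ v : k, v ∈ L.ker → Polynomial.eval v P = 0 := by
      intro v hv
      rw [AddMonoidHom.mem_ker] at hv
      rw [hPdef, linPoly_eval]
      have := linEval_eq_sum_range q g v (Nat.lt_succ_self g.natDegree)
      rw [← this]
      exact hv
    have hfin : (L.ker : Set k).Finite := Set.toFinite _
    have hsub : hfin.toFinset ⊆ P.roots.toFinset := by
      intro v hv
      rw [Set.Finite.mem_toFinset] at hv
      rw [Multiset.mem_toFinset, Polynomial.mem_roots hPne]
      exact hroots v hv
    have h1 : Nat.card L.ker = hfin.toFinset.card := by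
      rw [← Nat.card_eq_card_finite_toFinset hfin]
      rfl
    have h2 := Finset.card_le_card hsub
    have h3 := Multiset.toFinset_card_le P.roots
    have h4 := Polynomial.card_roots' P
    have h5 : P.natDegree ≤ q ^ g.natDegree := by
      have := linPoly_natDegree_le (k := k) (by omega : 1 ≤ q) (g.natDegree + 1) c
      simpa using this
    omega
  have hkerpos : 0 < Nat.card L.ker := Nat.card_pos
  calc Fintype.card k = Nat.card k := (Nat.card_eq_fintype_card).symm
    _ = Nat.card (Set.range (linEval (k := k) q g)) * Nat.card L.ker := by
        rw [hcard, hquot, hrange]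
    _ ≤ Nat.card (Set.range (linEval (k := k) q g)) * q ^ g.natDegree :=
        Nat.mul_le_mul_left _ hker




def coeffLM {σ K : Type} [Field K] (d : σ →₀ ℕ) : MvPolynomial σ K →ₗ[K] K :=
  { toFun := MvPolynomial.coeff d, map_add' := fun x y => MvPolynomial.coeff_add d x y,
    map_smul' := fun c x => MvPolynomial.coeff_smul d c x }

theorem span_X_repr {σ K : Type} [Fintype σ] [Field K] (h : MvPolynomial σ K)
    (hh : h ∈ Submodule.span K (Set.range (MvPolynomial.X (R := K) (σ := σ)))) :
    h = ∑ p : σ, MvPolynomial.coeff (Finsupp.single p 1) h • MvPolynomial.X p := by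
  classical
  set T : MvPolynomial σ K →ₗ[K] MvPolynomial σ K :=
    ∑ p : σ, (coeffLM (Finsupp.single p 1)).smulRight (MvPolynomial.X p) with hT
  have hTapp : ∀ x : MvPolynomial σ K,
      T x = ∑ p : σ, MvPolynomial.coeff (Finsupp.single p 1) x • MvPolynomial.X p := by
    intro x
    rw [hT, LinearMap.sum_apply]
    apply Finset.sum_congr rfl
    intro p _
    rw [LinearMap.smulRight_apply]
    rfl
  have hgen : ∀ p0 : σ, T (MvPolynomial.X p0) = MvPolynomial.X p0 := by
    intro p0
    rw [hTapp, Finset.sum_eq_single p0]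
    · rw [MvPolynomial.coeff_X' p0, if_pos rfl, one_smul]
    · intro p _ hne
      rw [MvPolynomial.coeff_X' p0, if_neg, zero_smul]
      rw [Finsupp.single_left_inj (one_ne_zero)]
      exact fun e => hne e.symm
    · intro hmem; exact absurd (Finset.mem_univ p0) hmem
  have hle : Submodule.span K (Set.range (MvPolynomial.X (R := K) (σ := σ)))
      ≤ LinearMap.eqLocus T LinearMap.id := by
    rw [Submodule.span_le]
    rintro _ ⟨p0, rfl⟩
    exact hgen p0
  have := hle hh
  have hTh : T h = h := this
  exact hTh.symm.trans (hTapp h)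


end QbarAux

/-- The elements of `S₁` are pairwise distinct modulo the ideal `⟨Q̄⟩`; equivalently,
no nonzero `k`-linear form in the variables `x_{ij}` lies in the ideal generated by `Q̄`. -/
theorem linear_forms_distinct_mod_Qbar
    {k' k : Type} [Field k'] [Fintype k'] [Field k] [Algebra k' k]
    (q n m : ℕ) (hq : q = Fintype.card k') (hn : 0 < n)
    (α : Module.Basis (Fin n) k' k)
    (fW : Polynomial k') (hmonic : fW.Monic) (hdvd : fW ∣ Polynomial.X ^ n - 1)
    (n' : ℕ) (hn' : n' = fW.natDegree) (hn'pos : 0 < n')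
    (gW : Polynomial k') (hgW : gW = Polynomial.X ^ n' - fW) :
    ∀ f g : MvPolynomial (Fin m × Fin n') k,
      f ∈ S1r m n' 0 → g ∈ S1r m n' 0 →
      f - g ∈ Ideal.span (QbarFrom m n' q 0 (gW.map (algebraMap k' k))) →
      f = g := by
  classical
  intro f g hf hg hmem
  have hq2 : 2 ≤ q := by rw [hq]; exact Fintype.one_lt_card
  obtain ⟨g0, hg0⟩ := hdvd
  have hXnmonic : (Polynomial.X ^ n - 1 : Polynomial k').Monic := by
    have := Polynomial.monic_X_pow_sub_C (1 : k') hn.ne'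
    simpa using this
  have hXn_deg : (Polynomial.X ^ n - 1 : Polynomial k').natDegree = n := by
    have : (Polynomial.X ^ n - Polynomial.C 1 : Polynomial k').natDegree = n :=
      Polynomial.natDegree_X_pow_sub_C
    simpa using this
  have hg0monic : g0.Monic := hmonic.of_mul_monic_left (by rw [← hg0]; exact hXnmonic)
  have hdegsum : n' + g0.natDegree = n := by
    have h1 : (fW * g0).natDegree = fW.natDegree + g0.natDegree :=
      Polynomial.natDegree_mul hmonic.ne_zero hg0monic.ne_zero
    rw [← hg0, hXn_deg] at h1
    omega
  have hn'le : n' ≤ n := by omega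
  have hg0deg : g0.natDegree = n - n' := by omega
  haveI : Module.Finite k' k := Module.Finite.of_basis α
  haveI : Finite k := Module.finite_of_finite k'
  haveI : Fintype k := Fintype.ofFinite k
  have hcardk : Fintype.card k = q ^ n := by
    rw [Module.card_fintype α, hq, Fintype.card_fin]
  have hgWdeg : gW.natDegree < n' := by
    by_cases h0 : gW = 0
    · rw [h0]; simpa using hn'pos
    · have hle : gW.natDegree ≤ n' := by
        rw [hgW]
        refine le_trans (Polynomial.natDegree_sub_le _ _) ?_
        simp [Polynomial.natDegree_X_pow, hn']
      rcases lt_or_eq_of_le hle with hlt | heq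
      · exact hlt
      · exfalso
        have hcoeff : gW.coeff n' = 0 := by
          rw [hgW, Polynomial.coeff_sub, Polynomial.coeff_X_pow, if_pos rfl, hn',
            hmonic.coeff_natDegree, sub_self]
        have hne := Polynomial.leadingCoeff_ne_zero.mpr h0
        rw [Polynomial.leadingCoeff, heq] at hne
        exact hne hcoeff
  set V : Set k := Set.range (QbarAux.linEval (k := k) q g0) with hVdef
  have hVrel : ∀ a ∈ V, a ^ q ^ n' = QbarAux.linEval q gW a := by
    rintro _ ⟨b, rfl⟩
    have h1 : QbarAux.linEval q fW (QbarAux.linEval q g0 b) = 0 := by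
      rw [← QbarAux.linEval_mul q hq, ← hg0, QbarAux.linEval_sub, QbarAux.linEval_X_pow,
        QbarAux.linEval_one]
      have hb : (b : k) ^ q ^ n = b := by rw [← hcardk]; exact FiniteField.pow_card b
      rw [hb, sub_self]
    have hfW' : fW = Polynomial.X ^ n' - gW := by rw [hgW]; ring
    rw [hfW', QbarAux.linEval_sub, QbarAux.linEval_X_pow] at h1
    exact sub_eq_zero.mp h1
  have hVcard : q ^ n' ≤ Nat.card V := by
    have h1 := QbarAux.card_range_linEval (k := k) q hq g0 hg0monic
    rw [hcardk, hg0deg] at h1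
    have h2 : q ^ n = q ^ n' * q ^ (n - n') := by rw [← pow_add]; congr 1; omega
    rw [h2] at h1
    exact Nat.le_of_mul_le_mul_right h1 (by positivity)
  set h := f - g with hh
  have hhS : h ∈ S1r m n' 0 := Submodule.sub_mem _ hf hg
  have hhX : h ∈ Submodule.span k
      (Set.range (MvPolynomial.X (R := k) (σ := Fin m × Fin n'))) := by
    refine Submodule.span_mono ?_ hhS
    rintro P ⟨p, -, rfl⟩
    exact ⟨p, rfl⟩
  set c : Fin m × Fin n' → k := fun p => MvPolynomial.coeff (Finsupp.single p 1) h with hc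
  have hrepr : h = ∑ p : Fin m × Fin n', c p • MvPolynomial.X p :=
    QbarAux.span_X_repr h hhX
  have hvanish : ∀ b : Fin m → k,
      ∑ p : Fin m × Fin n', c p * (QbarAux.linEval q g0 (b p.1)) ^ q ^ (p.2 : ℕ) = 0 := by
    intro b
    set pt : Fin m × Fin n' → k :=
      fun p => (QbarAux.linEval q g0 (b p.1)) ^ q ^ (p.2 : ℕ) with hpt
    have hker : ∀ P ∈ QbarFrom m n' q 0 (gW.map (algebraMap k' k)),
        (MvPolynomial.aeval pt) P = 0 := by
      rintro P (⟨i, j, hj, -, rfl⟩ | ⟨i, j, -, hjn, rfl⟩)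
      · rw [map_sub, map_pow, MvPolynomial.aeval_X, MvPolynomial.aeval_X]
        show (QbarAux.linEval q g0 (b i) ^ q ^ (j : ℕ)) ^ q
            - QbarAux.linEval q g0 (b i) ^ q ^ ((j : ℕ) + 1) = 0
        rw [← pow_mul, ← pow_succ, sub_self]
      · rw [map_sub, map_pow, MvPolynomial.aeval_X]
        have hA : QbarAux.linEval q g0 (b i) ∈ V := ⟨b i, rfl⟩
        have he : (MvPolynomial.aeval pt) (ellAt m n' i (gW.map (algebraMap k' k)))
            = QbarAux.linEval q gW (QbarAux.linEval q g0 (b i)) := by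
          rw [ellAt, map_sum,
            QbarAux.linEval_eq_sum_range q gW (QbarAux.linEval q g0 (b i)) hgWdeg,
            Finset.sum_range]
          apply Finset.sum_congr rfl
          intro j' _
          rw [map_mul, MvPolynomial.aeval_C, MvPolynomial.aeval_X, Polynomial.coeff_map]
          rfl
        rw [he, ← hVrel _ hA]
        show (QbarAux.linEval q g0 (b i) ^ q ^ (j : ℕ)) ^ q
            - QbarAux.linEval q g0 (b i) ^ q ^ n' = 0
        rw [← pow_mul, ← pow_succ, hjn, sub_self]
    have hle : Ideal.span (QbarFrom m n' q 0 (gW.map (algebraMap k' k)))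
        ≤ RingHom.ker (MvPolynomial.aeval pt :
            MvPolynomial (Fin m × Fin n') k →ₐ[k] k) := by
      rw [Ideal.span_le]
      intro P hP
      exact hker P hP
    have h0 : (MvPolynomial.aeval pt) h = 0 := hle hmem
    rw [hrepr, map_sum] at h0
    rw [← h0]
    apply Finset.sum_congr rfl
    intro p _
    rw [map_smul, MvPolynomial.aeval_X, smul_eq_mul]
  have hczero : ∀ p : Fin m × Fin n', c p = 0 := by
    rintro ⟨i0, j0⟩
    have hsum : ∀ t : k,
        ∑ j : Fin n', c (i0, j) * (QbarAux.linEval q g0 t) ^ q ^ (j : ℕ) = 0 := by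
      intro t
      have hvb := hvanish (fun i => if i = i0 then t else 0)
      rw [Fintype.sum_prod_type] at hvb
      rw [Finset.sum_eq_single i0] at hvb
      · simpa using hvb
      · intro i _ hne
        apply Finset.sum_eq_zero
        intro j _
        simp only [if_neg hne]
        rw [QbarAux.linEval_zero_right q hq, zero_pow (by positivity), mul_zero]
      · intro hmem'; exact absurd (Finset.mem_univ i0) hmem'
    set c' : ℕ → k := fun j => if hj : j < n' then c (i0, ⟨j, hj⟩) else 0 with hc'
    have hroots : ∀ v ∈ V, Polynomial.eval v (QbarAux.linPoly q n' c') = 0 := by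
      rintro _ ⟨t, rfl⟩
      rw [QbarAux.linPoly_eval, Finset.sum_range]
      rw [← hsum t]
      apply Finset.sum_congr rfl
      intro j _
      congr 1
      rw [hc']
      simp only [Fin.is_lt, dif_pos]
    have hlt : q ^ (n' - 1) < Nat.card V :=
      lt_of_lt_of_le (Nat.pow_lt_pow_right (by omega) (by omega)) hVcard
    have hz := QbarAux.linPoly_coeff_eq_zero_of_roots hq2 n' c' V hroots hlt (j0 : ℕ) j0.isLt
    rw [hc'] at hz
    simp only [Fin.is_lt, dif_pos, Fin.eta] at hz
    exact hz
  have hzero : h = 0 := by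
    rw [hrepr]
    apply Finset.sum_eq_zero
    intro p _
    rw [hczero p, zero_smul]
  exact sub_eq_zero.mp hzero


end
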